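/- Let 2 ≤ r < s be integers and let G be an (r,s;g)-balanced biregular graph with g > 4 even. Then the order of G is at least 2·( s + (rs + (s−r)² − 2s + 1)·(1 + (r−1) + ⋯ + (r−1)^{(g−6)/2}) ). -/

import Mathlib

open SimpleGraph Set

/-- The degree of a vertex, via the natural cardinality of its neighbor set. -/
noncomputable def deg {V : Type*} (G : SimpleGraph V) (v : V) : ℕ :=
  (G.neighborSet v).ncard

/-- Number of edges both of whose endpoints have degree `d`. -/
noncomputable def edgeCountDeg {V : Type*} (G : SimpleGraph V) (d : ℕ) : ℕ :=
  {e ∈ G.edgeSet | ∀ v ∈ e, deg G v = d}.ncard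

/-- An `(r,s;g)`-balanced biregular graph: girth `g`, degree set exactly `{r, s}`,
and equally many vertices of degree `r` as of degree `s`. -/
def IsBabi {V : Type*} (r s g : ℕ) (G : SimpleGraph V) : Prop :=
  G.girth = g ∧ (∀ v, deg G v = r ∨ deg G v = s) ∧
  (∃ v, deg G v = r) ∧ (∃ v, deg G v = s) ∧
  {v | deg G v = r}.ncard = {v | deg G v = s}.ncard

section Aux

variable {V : Type*} {G : SimpleGraph V}

lemma exists_cycle_of_two_paths {x y : V} (p q : G.Walk x y)
    (hp : p.IsPath) (hq : q.IsPath) (hne : p ≠ q) :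
    ∃ (w : V) (c : G.Walk w w), c.IsCycle ∧ c.length ≤ p.length + q.length := by
  classical
  set s : Set (Sym2 V) := {e | e ∈ p.edges ∨ e ∈ q.edges} with hs
  set H : SimpleGraph V := SimpleGraph.fromEdgeSet s with hH
  have hpe : ∀ e ∈ p.edges, e ∈ H.edgeSet := by
    intro e he
    rw [hH, edgeSet_fromEdgeSet]
    exact ⟨Or.inl he, (G.not_isDiag_of_mem_edgeSet (p.edges_subset_edgeSet he))⟩
  have hqe : ∀ e ∈ q.edges, e ∈ H.edgeSet := by
    intro e he
    rw [hH, edgeSet_fromEdgeSet]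
    exact ⟨Or.inr he, (G.not_isDiag_of_mem_edgeSet (q.edges_subset_edgeSet he))⟩
  have hHG : ∀ e ∈ H.edgeSet, e ∈ G.edgeSet := by
    intro e he
    rw [hH, edgeSet_fromEdgeSet] at he
    rcases he.1 with h1 | h1
    · exact p.edges_subset_edgeSet h1
    · exact q.edges_subset_edgeSet h1
  by_cases hac : H.IsAcyclic
  · exfalso
    have := hac.path_unique ⟨p.transfer H hpe, hp.transfer hpe⟩ ⟨q.transfer H hqe, hq.transfer hqe⟩
    apply hne
    have h2 := congrArg (fun (r : H.Path x y) => (r : H.Walk x y)) this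
    simp only at h2
    have h3 := congrArg (fun (r : H.Walk x y) => r.transfer G (fun e he => by
      exact hHG e (r.edges_subset_edgeSet he))) h2
    simpa [Walk.transfer_transfer, Walk.transfer_self] using h3
  · rw [IsAcyclic] at hac
    push_neg at hac
    obtain ⟨w, c, hc⟩ := hac
    refine ⟨w, c.transfer G (fun e he => hHG e (c.edges_subset_edgeSet he)),
      hc.transfer _, ?_⟩
    rw [Walk.length_transfer]
    have hnd : c.edges.Nodup := hc.edges_nodup
    have hsub : c.edges ⊆ p.edges ++ q.edges := by
      intro e he
      have := c.edges_subset_edgeSet he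
      rw [hH, edgeSet_fromEdgeSet] at this
      exact List.mem_append.2 this.1
    calc c.length = c.edges.length := (Walk.length_edges c).symm
    _ ≤ (p.edges ++ q.edges).length := (hnd.subperm hsub).length_le
    _ = p.length + q.length := by simp

lemma path_eq_of_short {N : ℕ} (hgirth : ∀ ⦃w : V⦄ (c : G.Walk w w), c.IsCycle → N ≤ c.length)
    {x y : V} (p q : G.Walk x y) (hp : p.IsPath) (hq : q.IsPath)
    (hlen : p.length + q.length < N) : p = q := by
  by_contra hne
  obtain ⟨w, c, hc, hcl⟩ := exists_cycle_of_two_paths p q hp hq hne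
  exact absurd (hgirth c hc) (by omega)

/-- Splitting a walk at a support vertex bounds distances. -/
lemma dist_split [DecidableEq V] {x y z : V} (p : G.Walk x y) (h : z ∈ p.support) :
    G.dist x z + G.dist z y ≤ p.length := by
  have h1 : G.dist x z ≤ (p.takeUntil z h).length := dist_le _
  have h2 : G.dist z y ≤ (p.dropUntil z h).length := dist_le _
  have h3 : (p.takeUntil z h).length + (p.dropUntil z h).length = p.length := by
    rw [← Walk.length_append, p.take_spec h]
  omega

lemma dist_le_dist_add_one {x a b : V} (hr : G.Reachable x a) (hab : G.Adj a b) :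
    G.dist x b ≤ G.dist x a + 1 := by
  obtain ⟨p, hp⟩ := hr.exists_walk_length_eq_dist
  have := G.dist_le (p.concat hab)
  rwa [Walk.length_concat, hp] at this

/-- girth bridge -/
lemma girth_bound {g : ℕ} (hgirth : G.girth = g) (hg : 1 ≤ g) :
    ∀ ⦃w : V⦄ (c : G.Walk w w), c.IsCycle → g ≤ c.length := by
  intro w c hc
  have hnac : ¬ G.IsAcyclic := fun h => h c hc
  have : G.egirth ≠ ⊤ := by
    rw [ne_eq, egirth_eq_top]; exact hnac
  have he : G.egirth = (g : ℕ∞) := by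
    rw [SimpleGraph.girth] at hgirth
    rwa [← ENat.coe_toNat this, Nat.cast_inj]
  have h2 : (g : ℕ∞) ≤ (c.length : ℕ∞) := he ▸ le_egirth.1 (le_refl _) w c hc
  exact_mod_cast h2

lemma isPath_concat {u v w : V} {p : G.Walk u v} (hp : p.IsPath) (h : G.Adj v w)
    (hw : w ∉ p.support) : (p.concat h).IsPath := by
  rw [← Walk.isPath_reverse_iff, Walk.reverse_concat]
  exact Walk.IsPath.cons hp.reverse (by simpa using hw)

lemma eq_of_sgDist_eq_zero {x y : V} (h : G.dist x y = 0) (hr : G.Reachable x y) : x = y := by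
  by_contra hne
  exact (dist_ne_zero_iff_ne_and_reachable.2 ⟨hne, hr⟩) h

section Levels
variable [DecidableEq V]

/-- The set of vertices at distance `t` from `u` and `t+1` from `v`. -/
def lvl (G : SimpleGraph V) (u v : V) (t : ℕ) : Set V :=
  {w | G.dist u w = t ∧ G.dist v w = t + 1}

variable {k : ℕ} {u v : V}
  (hgirth : ∀ ⦃w : V⦄ (c : G.Walk w w), c.IsCycle → 2 * k ≤ c.length)
  (hk : 3 ≤ k) (huv : G.Adj u v)

include hgirth hk huv

lemma tie_false {w : V} {m : ℕ} (h1 : G.dist u w = m) (h2 : G.dist v w = m)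
    (hm : 1 ≤ m) (hmk : m ≤ k - 1) : False := by
  have hru : G.Reachable u w := Reachable.of_dist_ne_zero (by omega)
  have hrv : G.Reachable v w := Reachable.of_dist_ne_zero (by omega)
  obtain ⟨p, hp, hpl⟩ := hru.exists_path_of_dist
  obtain ⟨q, hq, hql⟩ := hrv.exists_path_of_dist
  have hdvu : G.dist v u = 1 := dist_eq_one_iff_adj.2 huv.symm
  have hun : u ∉ q.support := by
    intro hmem
    have := dist_split q hmem
    rw [hql, h2, hdvu, h1] at this
    omega
  have hq2 : (Walk.cons huv q).IsPath := Walk.IsPath.cons hq hun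
  have := path_eq_of_short hgirth p (Walk.cons huv q) hp hq2 (by
    rw [hpl, Walk.length_cons, hql, h1, h2]; omega)
  have hlen := congrArg Walk.length this
  rw [hpl, Walk.length_cons, hql, h1, h2] at hlen
  omega

lemma parent_unique {x : V} {m : ℕ} (hx : G.dist u x = m + 1) (hmk : m + 1 ≤ k - 1) :
    {y | G.Adj x y ∧ G.dist u y = m}.Subsingleton := by
  intro y1 hy1 y2 hy2
  simp only [Set.mem_setOf_eq] at hy1 hy2
  have hrx : G.Reachable u x := Reachable.of_dist_ne_zero (by omega)
  have hry1 : G.Reachable u y1 := hrx.trans hy1.1.reachable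
  have hry2 : G.Reachable u y2 := hrx.trans hy2.1.reachable
  have hr12 : G.Reachable y1 y2 := hy1.1.symm.reachable.trans hy2.1.reachable
  rcases Nat.eq_zero_or_pos m with hm0 | hm1
  · rw [hm0] at hy1 hy2
    exact (eq_of_sgDist_eq_zero hy1.2 hry1).symm.trans (eq_of_sgDist_eq_zero hy2.2 hry2)
  · obtain ⟨q1, hq1, hq1l⟩ := hry1.exists_path_of_dist
    obtain ⟨q2, hq2, hq2l⟩ := hry2.exists_path_of_dist
    have hx1 : x ∉ q1.support := by
      intro hmem
      have := dist_split q1 hmem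
      rw [hq1l, hy1.2, hx] at this
      omega
    have hx2 : x ∉ q2.support := by
      intro hmem
      have := dist_split q2 hmem
      rw [hq2l, hy2.2, hx] at this
      omega
    have hp1 : (q1.concat hy1.1.symm).IsPath := isPath_concat hq1 _ hx1
    have hp2 : (q2.concat hy2.1.symm).IsPath := isPath_concat hq2 _ hx2
    have heq := path_eq_of_short hgirth _ _ hp1 hp2 (by
      rw [Walk.length_concat, Walk.length_concat, hq1l, hq2l, hy1.2, hy2.2]; omega)
    have hsup : y1 ∈ (q2.concat hy2.1.symm).support := by
      rw [← heq, Walk.support_concat]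
      simp only [List.concat_eq_append, List.mem_append]
      exact Or.inl q1.end_mem_support
    rw [Walk.support_concat] at hsup
    rw [List.mem_append] at hsup
    rcases hsup with hmem | hmem
    · have := dist_split q2 hmem
      rw [hq2l, hy1.2, hy2.2] at this
      exact eq_of_sgDist_eq_zero (by omega) hr12
    · simp at hmem
      exact absurd hmem.symm hy1.1.ne


lemma lvl_zero : lvl G u v 0 = {u} := by
  ext w
  simp only [lvl, Set.mem_setOf_eq, Set.mem_singleton_iff]
  constructor
  · rintro ⟨h0, h1⟩
    have hrv : G.Reachable v w := Reachable.of_dist_ne_zero (by omega)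
    exact (eq_of_sgDist_eq_zero h0 (huv.reachable.trans hrv)).symm
  · rintro rfl
    exact ⟨dist_self, dist_eq_one_iff_adj.2 huv.symm⟩

lemma lvl_one : lvl G u v 1 = G.neighborSet u \ {v} := by
  ext x
  simp only [lvl, Set.mem_setOf_eq, Set.mem_diff, mem_neighborSet, Set.mem_singleton_iff]
  constructor
  · rintro ⟨h1, h2⟩
    refine ⟨dist_eq_one_iff_adj.1 h1, ?_⟩
    rintro rfl
    rw [dist_self] at h2
    omega
  · rintro ⟨hadj, hne⟩
    refine ⟨dist_eq_one_iff_adj.2 hadj, ?_⟩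
    have h2 : G.dist v x ≤ 2 := by
      have := dist_le_dist_add_one (huv.symm.reachable) hadj
      rw [dist_eq_one_iff_adj.2 huv.symm] at this
      omega
    have h0 : G.dist v x ≠ 0 := dist_ne_zero_iff_ne_and_reachable.2
      ⟨fun h => hne h.symm, huv.symm.reachable.trans hadj.reachable⟩
    have h1 : G.dist v x ≠ 1 := by
      intro hd
      have hvx : G.Adj v x := dist_eq_one_iff_adj.1 hd
      have hp1 : (Walk.cons hadj Walk.nil : G.Walk u x).IsPath := by
        simp [Walk.cons_isPath_iff, hadj.ne]
      have hp2 : (Walk.cons huv (Walk.cons hvx Walk.nil) : G.Walk u x).IsPath := by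
        simp [Walk.cons_isPath_iff, huv.ne, hadj.ne, hvx.ne]
      have := path_eq_of_short hgirth _ _ hp1 hp2 (by simp; omega)
      have := congrArg Walk.length this
      simp at this
    omega

/-- Neighbor classification: a neighbor of a vertex in level `t` is either a parent
(at distance `t-1` from `u`) or lies in level `t+1`. -/
lemma nbr {w x : V} {t : ℕ} (hw : w ∈ lvl G u v t) (ht : 1 ≤ t) (htk : t ≤ k - 2)
    (hx : G.Adj w x) : G.dist u x = t - 1 ∨ x ∈ lvl G u v (t + 1) := by
  obtain ⟨hwu, hwv⟩ := hw
  have hru : G.Reachable u w := Reachable.of_dist_ne_zero (by omega)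
  have hrv : G.Reachable v w := Reachable.of_dist_ne_zero (by omega)
  have hrux : G.Reachable u x := hru.trans hx.reachable
  have hrvx : G.Reachable v x := hrv.trans hx.reachable
  have hub : G.dist u x ≤ t + 1 := by
    have := dist_le_dist_add_one hru hx
    omega
  have hlb : t ≤ G.dist u x + 1 := by
    have := dist_le_dist_add_one hrux hx.symm
    omega
  have hnot : G.dist u x ≠ t := by
    intro hdx
    obtain ⟨p, hp, hpl⟩ := hrux.exists_path_of_dist
    obtain ⟨q, hq, hql⟩ := hru.exists_path_of_dist
    have hxs : x ∉ q.support := by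
      intro hmem
      have := dist_split q hmem
      rw [hql, hwu, hdx] at this
      have : G.dist x w = 0 := by omega
      exact hx.ne (eq_of_sgDist_eq_zero this hx.symm.reachable).symm
    have hp2 : (q.concat hx).IsPath := isPath_concat hq _ hxs
    have heq := path_eq_of_short hgirth p (q.concat hx) hp hp2 (by
      rw [hpl, Walk.length_concat, hql, hdx, hwu]; omega)
    have := congrArg Walk.length heq
    rw [hpl, Walk.length_concat, hql, hdx, hwu] at this
    omega
  rcases Nat.lt_or_ge (G.dist u x) t with hlt | hge
  · left; omega
  · right
    have hdx : G.dist u x = t + 1 := by omega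
    have hvub : G.dist v x ≤ t + 2 := by
      have := dist_le_dist_add_one hrv hx
      omega
    have hvlb : t ≤ G.dist v x := by
      have := G.dist_le (Walk.cons huv (hrvx.exists_path_of_dist.choose))
      rw [Walk.length_cons, hrvx.exists_path_of_dist.choose_spec.2] at this
      omega
    have hvne1 : G.dist v x ≠ t + 1 := by
      intro hd
      exact tie_false hgirth hk huv hdx hd (by omega) (by omega)
    have hvne0 : G.dist v x ≠ t := by
      intro hd
      -- p1 : u → w → x,  p2 : u → v → ⋯ → x
      obtain ⟨q, hq, hql⟩ := hru.exists_path_of_dist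
      obtain ⟨q', hq', hql'⟩ := hrvx.exists_path_of_dist
      have hxs : x ∉ q.support := by
        intro hmem
        have := dist_split q hmem
        rw [hql, hwu, hdx] at this
        omega
      have hp1 : (q.concat hx).IsPath := isPath_concat hq _ hxs
      have hus : u ∉ q'.support := by
        intro hmem
        have := dist_split q' hmem
        rw [hql', hd, dist_eq_one_iff_adj.2 huv.symm, hdx] at this
        omega
      have hp2 : (Walk.cons huv q').IsPath := Walk.IsPath.cons hq' hus
      have hvn1 : v ∉ (q.concat hx).support := by
        rw [Walk.support_concat, List.mem_append]
        rintro (hmem | hmem)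
        · have := dist_split q hmem
          rw [hql, hwu, dist_eq_one_iff_adj.2 huv] at this
          omega
        · simp at hmem
          rw [← hmem, dist_self] at hd
          omega
      have heq := path_eq_of_short hgirth (q.concat hx) (Walk.cons huv q') hp1 hp2 (by
        rw [Walk.length_concat, Walk.length_cons, hql, hql', hwu, hd]; omega)
      apply hvn1
      rw [heq]
      simp
    have : G.dist v x = t + 2 := by omega
    exact ⟨hdx, this⟩


section Count
variable [Fintype V]

lemma children_count {w : V} {t : ℕ} (hw : w ∈ lvl G u v t) (ht : 1 ≤ t) (htk : t ≤ k - 2) :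
    deg G w ≤ (G.neighborSet w ∩ lvl G u v (t + 1)).ncard + 1 := by
  classical
  have hps : {y | G.Adj w y ∧ G.dist u y = t - 1}.Subsingleton := by
    have h1 : G.dist u w = (t - 1) + 1 := by rw [hw.1]; omega
    exact parent_unique hgirth hk huv h1 (by omega)
  have hsub : G.neighborSet w ⊆
      (G.neighborSet w ∩ lvl G u v (t + 1)) ∪ {y | G.Adj w y ∧ G.dist u y = t - 1} := by
    intro x hx
    rcases nbr hgirth hk huv hw ht htk hx with hc | hc
    · exact Or.inr ⟨hx, hc⟩
    · exact Or.inl ⟨hx, hc⟩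
  calc deg G w ≤ ((G.neighborSet w ∩ lvl G u v (t + 1)) ∪
        {y | G.Adj w y ∧ G.dist u y = t - 1}).ncard := by
        apply Set.ncard_le_ncard hsub (Set.Finite.union (Set.toFinite _) ?_)
        exact Set.Finite.subset (Set.toFinite (G.neighborSet w)) (fun y hy => hy.1)
  _ ≤ (G.neighborSet w ∩ lvl G u v (t + 1)).ncard +
        {y | G.Adj w y ∧ G.dist u y = t - 1}.ncard := Set.ncard_union_le _ _
  _ ≤ (G.neighborSet w ∩ lvl G u v (t + 1)).ncard + 1 := by
        have := (Set.ncard_le_one (Set.toFinite _)).2 (fun a ha b hb => hps ha hb)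
        omega

lemma step_count {t : ℕ} (ht : 1 ≤ t) (htk : t ≤ k - 2) :
    ∑ w ∈ (Set.toFinite (lvl G u v t)).toFinset, (deg G w - 1)
      ≤ (lvl G u v (t + 1)).ncard := by
  classical
  set Pf := (Set.toFinite (lvl G u v t)).toFinset with hPf
  set Qf := (Set.toFinite (lvl G u v (t + 1))).toFinset with hQf
  have h1 : ∀ w ∈ Pf, deg G w - 1 ≤ (Qf.filter (fun x => G.Adj w x)).card := by
    intro w hwm
    rw [hPf, Set.Finite.mem_toFinset] at hwm
    have hcc := children_count hgirth hk huv hwm ht htk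
    have heq : Qf.filter (fun x => G.Adj w x)
        = (Set.toFinite (G.neighborSet w ∩ lvl G u v (t + 1))).toFinset := by
      ext x
      simp only [Finset.mem_filter, Set.Finite.mem_toFinset, hQf, Set.mem_inter_iff,
        mem_neighborSet]
      tauto
    rw [heq, ← Set.ncard_eq_toFinset_card]
    omega
  calc ∑ w ∈ Pf, (deg G w - 1) ≤ ∑ w ∈ Pf, (Qf.filter (fun x => G.Adj w x)).card :=
        Finset.sum_le_sum h1
  _ = ∑ x ∈ Qf, (Pf.filter (fun w => G.Adj w x)).card := by
        simp_rw [Finset.card_filter]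
        exact Finset.sum_comm
  _ ≤ ∑ _x ∈ Qf, 1 := by
        apply Finset.sum_le_sum
        intro x hxm
        rw [hQf, Set.Finite.mem_toFinset] at hxm
        apply Finset.card_le_one.2
        intro a ha b hb
        rw [Finset.mem_filter, hPf, Set.Finite.mem_toFinset] at ha hb
        have hpu := parent_unique hgirth hk huv (u := u) (x := x) (m := t) hxm.1 (by omega)
        exact hpu ⟨ha.2.symm, ha.1.1⟩ ⟨hb.2.symm, hb.1.1⟩
  _ = (lvl G u v (t + 1)).ncard := by
        rw [Finset.sum_const, smul_eq_mul, mul_one, hQf, ← Set.ncard_eq_toFinset_card]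

lemma lvl_ge_pow {r : ℕ} (hdeg : ∀ w, r ≤ deg G w)
    {j : ℕ} (hj : j ≤ k - 3) :
    (∑ w ∈ (Set.toFinite (lvl G u v 1)).toFinset, (deg G w - 1)) * (r - 1) ^ j
      ≤ (lvl G u v (2 + j)).ncard := by
  classical
  induction j with
  | zero => simpa using step_count hgirth hk huv (le_refl 1) (by omega)
  | succ j ih =>
    have hih := ih (by omega)
    have hstep := step_count hgirth hk huv (t := 2 + j) (by omega) (by omega)
    have h2 : (lvl G u v (2 + j)).ncard * (r - 1)
        ≤ ∑ w ∈ (Set.toFinite (lvl G u v (2 + j))).toFinset, (deg G w - 1) := by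
      rw [Set.ncard_eq_toFinset_card (lvl G u v (2 + j)) (Set.toFinite _), Finset.card_eq_sum_ones,
        Finset.sum_mul, one_mul]
      apply Finset.sum_le_sum
      intro w _
      have := hdeg w
      omega
    have : 2 + (j + 1) = (2 + j) + 1 := by omega
    rw [this, pow_succ, ← mul_assoc]
    calc (∑ w ∈ (Set.toFinite (lvl G u v 1)).toFinset, (deg G w - 1)) * (r - 1) ^ j * (r - 1)
        ≤ (lvl G u v (2 + j)).ncard * (r - 1) := by
          exact Nat.mul_le_mul_right _ hih
    _ ≤ _ := le_trans h2 hstep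


lemma side_sum {r : ℕ} (hdeg : ∀ w, r ≤ deg G w) (hru : 1 ≤ deg G u) :
    deg G u + (∑ w ∈ (Set.toFinite (lvl G u v 1)).toFinset, (deg G w - 1)) *
        (∑ j ∈ Finset.range (k - 2), (r - 1) ^ j)
      ≤ ∑ t ∈ Finset.range k, (lvl G u v t).ncard := by
  classical
  have h0 : (lvl G u v 0).ncard = 1 := by
    rw [lvl_zero hgirth hk huv, Set.ncard_singleton]
  have h1 : (lvl G u v 1).ncard = deg G u - 1 := by
    rw [lvl_one hgirth hk huv,
      Set.ncard_diff_singleton_of_mem (show v ∈ G.neighborSet u from huv)]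
    rfl
  have hsplit : ∑ t ∈ Finset.range k, (lvl G u v t).ncard
      = (lvl G u v 0).ncard + (lvl G u v 1).ncard
        + ∑ j ∈ Finset.range (k - 2), (lvl G u v (2 + j)).ncard := by
    have e1 : ∑ t ∈ Finset.range k, (lvl G u v t).ncard
        = ∑ t ∈ Finset.Ico 0 2, (lvl G u v t).ncard
          + ∑ t ∈ Finset.Ico 2 k, (lvl G u v t).ncard := by
      rw [Finset.range_eq_Ico, Finset.sum_Ico_consecutive _ (by omega : (0:ℕ) ≤ 2)
        (by omega : 2 ≤ k)]
    have e2 : ∑ t ∈ Finset.Ico 0 2, (lvl G u v t).ncard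
        = (lvl G u v 0).ncard + (lvl G u v 1).ncard := by
      rw [Nat.Ico_zero_eq_range, Finset.sum_range_succ, Finset.sum_range_succ,
        Finset.sum_range_zero]
      omega
    have e3 : ∑ t ∈ Finset.Ico 2 k, (lvl G u v t).ncard
        = ∑ j ∈ Finset.range (k - 2), (lvl G u v (2 + j)).ncard :=
      Finset.sum_Ico_eq_sum_range _ _ _
    rw [e1, e2, e3]
  rw [hsplit, h0, h1, Finset.mul_sum]
  have hterm : ∀ j ∈ Finset.range (k - 2),
      (∑ w ∈ (Set.toFinite (lvl G u v 1)).toFinset, (deg G w - 1)) * (r - 1) ^ j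
        ≤ (lvl G u v (2 + j)).ncard := by
    intro j hj
    rw [Finset.mem_range] at hj
    exact lvl_ge_pow hgirth hk huv hdeg (by omega)
  have := Finset.sum_le_sum hterm
  omega

lemma total_card :
    ∑ t ∈ Finset.range k, ((lvl G u v t).ncard + (lvl G v u t).ncard)
      ≤ Fintype.card V := by
  classical
  set D : ℕ → Finset V := fun t =>
    (Set.toFinite (lvl G u v t)).toFinset ∪ (Set.toFinite (lvl G v u t)).toFinset with hD
  have hmem : ∀ t x, x ∈ D t ↔ (x ∈ lvl G u v t ∨ x ∈ lvl G v u t) := by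
    intro t x
    simp only [hD, Finset.mem_union, Set.Finite.mem_toFinset]
  have hcard : ∀ t, (D t).card = (lvl G u v t).ncard + (lvl G v u t).ncard := by
    intro t
    rw [hD]
    rw [Finset.card_union_of_disjoint, ← Set.ncard_eq_toFinset_card, ← Set.ncard_eq_toFinset_card]
    rw [Finset.disjoint_left]
    intro x hx1 hx2
    rw [Set.Finite.mem_toFinset] at hx1 hx2
    have := hx1.1; have := hx1.2; have := hx2.1; have := hx2.2
    omega
  have hdisj : ∀ t1 ∈ Finset.range k, ∀ t2 ∈ Finset.range k, t1 ≠ t2 → Disjoint (D t1) (D t2) := by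
    intro t1 _ t2 _ hne
    rw [Finset.disjoint_left]
    intro x hx1 hx2
    rw [hmem] at hx1 hx2
    apply hne
    rcases hx1 with h1 | h1 <;> rcases hx2 with h2 | h2 <;>
      [skip; skip; skip; skip] <;>
      · have a1 := h1.1; have a2 := h1.2; have b1 := h2.1; have b2 := h2.2
        omega
  calc ∑ t ∈ Finset.range k, ((lvl G u v t).ncard + (lvl G v u t).ncard)
      = ∑ t ∈ Finset.range k, (D t).card := by
        exact Finset.sum_congr rfl (fun t _ => (hcard t).symm)
  _ = ((Finset.range k).biUnion D).card := (Finset.card_biUnion hdisj).symm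
  _ ≤ Fintype.card V := Finset.card_le_univ _

end Count
end Levels

section Avg
variable {V : Type*} [Fintype V] {G : SimpleGraph V}

set_option maxHeartbeats 2000000 in
open Finset in
/-- There is an edge between two degree-`s` vertices whose numbers of degree-`s`
neighbours sum to at least `2*(s-r)`. -/
lemma exists_good_edge {r s : ℕ} (hrs : r < s)
    (hdeg : ∀ v, deg G v = r ∨ deg G v = s)
    (hbal : {v | deg G v = r}.ncard = {v | deg G v = s}.ncard)
    (hex : ∃ v, deg G v = s) :
    ∃ x y, G.Adj x y ∧ deg G x = s ∧ deg G y = s ∧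
      2 * (s - r) ≤ ((G.neighborSet x) ∩ {z | deg G z = s}).ncard
        + ((G.neighborSet y) ∩ {z | deg G z = s}).ncard := by
  classical
  set a : V → ℕ := fun x => (Finset.univ.filter (fun y => G.Adj x y ∧ deg G y = s)).card with ha
  set b : V → ℕ := fun x => (Finset.univ.filter (fun y => G.Adj x y ∧ deg G y = r)).card with hb
  have hancard : ∀ x, a x = ((G.neighborSet x) ∩ {z | deg G z = s}).ncard := by
    intro x
    have he : (Set.toFinite ((G.neighborSet x) ∩ {z | deg G z = s})).toFinset
        = Finset.univ.filter (fun y => G.Adj x y ∧ deg G y = s) := by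
      ext y
      simp only [Set.Finite.mem_toFinset, Finset.mem_filter, Finset.mem_univ, true_and,
        Set.mem_inter_iff, mem_neighborSet, Set.mem_setOf_eq]
    rw [Set.ncard_eq_toFinset_card _ (Set.toFinite _), he]
  set Vs : Finset V := Finset.univ.filter (fun v => deg G v = s) with hVs
  set Vr : Finset V := Finset.univ.filter (fun v => deg G v = r) with hVr
  set N : ℕ := Vs.card with hN
  have hdegcard : ∀ x, deg G x = (Finset.univ.filter (fun y => G.Adj x y)).card := by
    intro x
    have he : (Set.toFinite (G.neighborSet x)).toFinset
        = Finset.univ.filter (fun y => G.Adj x y) := by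
      ext y
      simp [Set.Finite.mem_toFinset]
    rw [deg, Set.ncard_eq_toFinset_card _ (Set.toFinite _), he]
  have hab : ∀ x, a x + b x = deg G x := by
    intro x
    rw [hdegcard x, ha, hb, ← Finset.card_union_of_disjoint]
    · congr 1
      ext y
      simp only [Finset.mem_union, Finset.mem_filter, Finset.mem_univ, true_and]
      constructor
      · rintro (h | h) <;> exact h.1
      · intro hy
        rcases hdeg y with h | h
        · exact Or.inr ⟨hy, h⟩
        · exact Or.inl ⟨hy, h⟩
    · rw [Finset.disjoint_left]
      intro y hy1 hy2
      simp only [Finset.mem_filter] at hy1 hy2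
      omega
  have hNr : Vr.card = N := by
    have h1 : {v | deg G v = r}.ncard = Vr.card := by
      rw [Set.ncard_eq_toFinset_card _ (Set.toFinite _)]
      congr 1; ext y; simp [hVr, Set.Finite.mem_toFinset]
    have h2 : {v | deg G v = s}.ncard = Vs.card := by
      rw [Set.ncard_eq_toFinset_card _ (Set.toFinite _)]
      congr 1; ext y; simp [hVs, Set.Finite.mem_toFinset]
    rw [hN, ← h1, hbal, h2]
  have hNpos : 1 ≤ N := by
    obtain ⟨v, hv⟩ := hex
    have : v ∈ Vs := by simp [hVs, hv]
    have := Finset.card_pos.2 ⟨v, this⟩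
    omega
  -- the set of ordered s-s edges
  set E : Finset (V × V) :=
    (Finset.univ ×ˢ Finset.univ).filter (fun p => G.Adj p.1 p.2 ∧ deg G p.1 = s ∧ deg G p.2 = s) with hE
  have key : ∀ f : V → ℕ, ∑ p ∈ E, f p.1 = ∑ x ∈ Vs, a x * f x := by
    intro f
    rw [hE, Finset.sum_filter, Finset.sum_product]
    have hpt : ∀ x : V, (∑ y : V, if G.Adj x y ∧ deg G x = s ∧ deg G y = s then f x else 0)
        = if deg G x = s then a x * f x else 0 := by
      intro x
      by_cases hx : deg G x = s
      · rw [if_pos hx]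
        have : (∑ y : V, if G.Adj x y ∧ deg G x = s ∧ deg G y = s then f x else 0)
            = ∑ y ∈ Finset.univ.filter (fun y => G.Adj x y ∧ deg G y = s), f x := by
          rw [Finset.sum_filter]
          apply Finset.sum_congr rfl
          intro y _
          by_cases hy : G.Adj x y ∧ deg G y = s
          · rw [if_pos ⟨hy.1, hx, hy.2⟩, if_pos hy]
          · rw [if_neg (fun hc => hy ⟨hc.1, hc.2.2⟩), if_neg hy]
        rw [this, Finset.sum_const, smul_eq_mul]
      · rw [if_neg hx]
        apply Finset.sum_eq_zero
        intro y _
        rw [if_neg (fun hc => hx hc.2.1)]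
    rw [Finset.sum_congr rfl (fun x _ => hpt x), ← Finset.sum_filter]
  have key2 : ∀ f : V → ℕ, ∑ p ∈ E, f p.2 = ∑ x ∈ Vs, a x * f x := by
    intro f
    rw [hE, Finset.sum_filter, Finset.sum_product, Finset.sum_comm]
    have hpt : ∀ y : V, (∑ x : V, if G.Adj x y ∧ deg G x = s ∧ deg G y = s then f y else 0)
        = if deg G y = s then a y * f y else 0 := by
      intro y
      by_cases hy : deg G y = s
      · rw [if_pos hy]
        have he : (∑ x : V, if G.Adj x y ∧ deg G x = s ∧ deg G y = s then f y else 0)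
            = ∑ x ∈ Finset.univ.filter (fun x => G.Adj y x ∧ deg G x = s), f y := by
          rw [Finset.sum_filter]
          apply Finset.sum_congr rfl
          intro x _
          by_cases hx : G.Adj y x ∧ deg G x = s
          · rw [if_pos ⟨hx.1.symm, hx.2, hy⟩, if_pos hx]
          · rw [if_neg (fun hc => hx ⟨hc.1.symm, hc.2.1⟩), if_neg hx]
        rw [he, Finset.sum_const, smul_eq_mul]
      · rw [if_neg hy]
        apply Finset.sum_eq_zero
        intro x _
        rw [if_neg (fun hc => hy hc.2.2)]
    rw [Finset.sum_congr rfl (fun y _ => hpt y), ← Finset.sum_filter]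
  have hswap : ∑ p ∈ E, a p.2 = ∑ p ∈ E, a p.1 := by rw [key a, key2 a]
  -- counting edges between the two classes
  have hcross : ∑ x ∈ Vs, b x ≤ r * N := by
    have hL : ∑ x ∈ Vs, b x =
        ((Finset.univ ×ˢ Finset.univ).filter
          (fun p : V × V => G.Adj p.1 p.2 ∧ deg G p.1 = s ∧ deg G p.2 = r)).card := by
      rw [Finset.card_filter, Finset.sum_product, Finset.sum_filter]
      apply Finset.sum_congr rfl
      intro x _
      by_cases hx : deg G x = s
      · rw [if_pos hx, show b x = (Finset.univ.filter (fun y => G.Adj x y ∧ deg G y = r)).card from rfl,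
          Finset.card_filter]
        apply Finset.sum_congr rfl
        intro y _
        by_cases hy : G.Adj x y ∧ deg G y = r
        · rw [if_pos hy, if_pos ⟨hy.1, hx, hy.2⟩]
        · rw [if_neg hy, if_neg (fun hc => hy ⟨hc.1, hc.2.2⟩)]
      · rw [if_neg hx]
        symm
        apply Finset.sum_eq_zero
        intro y _
        rw [if_neg (fun hc => hx hc.2.1)]
    have hR : ((Finset.univ ×ˢ Finset.univ).filter
          (fun p : V × V => G.Adj p.1 p.2 ∧ deg G p.1 = s ∧ deg G p.2 = r)).card
        = ∑ y ∈ Vr, a y := by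
      rw [Finset.card_filter, Finset.sum_product, Finset.sum_comm, Finset.sum_filter]
      apply Finset.sum_congr rfl
      intro y _
      by_cases hy : deg G y = r
      · rw [if_pos hy, show a y = (Finset.univ.filter (fun x => G.Adj y x ∧ deg G x = s)).card from rfl,
          Finset.card_filter]
        apply Finset.sum_congr rfl
        intro x _
        by_cases hx : G.Adj y x ∧ deg G x = s
        · rw [if_pos ⟨hx.1.symm, hx.2, hy⟩, if_pos hx]
        · rw [if_neg (fun hc => hx ⟨hc.1.symm, hc.2.1⟩), if_neg hx]
      · rw [if_neg hy]
        apply Finset.sum_eq_zero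
        intro x _
        rw [if_neg (fun hc => hy hc.2.2)]
    have hR2 : ∑ y ∈ Vr, a y ≤ r * N := by
      calc ∑ y ∈ Vr, a y ≤ ∑ y ∈ Vr, deg G y := by
            apply Finset.sum_le_sum
            intro y _
            have := hab y
            omega
      _ = ∑ y ∈ Vr, r := by
            apply Finset.sum_congr rfl
            intro y hy
            rw [hVr, Finset.mem_filter] at hy
            exact hy.2
      _ = r * N := by rw [Finset.sum_const, smul_eq_mul, hNr, mul_comm]
    rw [hL, hR]
    exact hR2
  set T : ℕ := ∑ x ∈ Vs, a x with hT
  have hTlb : s * N ≤ T + r * N := by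
    have h1 : ∑ x ∈ Vs, (a x + b x) = s * N := by
      have hc : ∀ x ∈ Vs, a x + b x = s := by
        intro x hx
        rw [hab x]
        exact (Finset.mem_filter.1 hx).2
      rw [Finset.sum_congr rfl hc, Finset.sum_const, smul_eq_mul, mul_comm, hN]
    rw [Finset.sum_add_distrib] at h1
    omega
  by_contra hcon
  push_neg at hcon
  have hEbound : ∀ p ∈ E, a p.1 + a p.2 ≤ 2 * (s - r) - 1 := by
    intro p hp
    rw [hE, Finset.mem_filter] at hp
    obtain ⟨-, hadj, h1, h2⟩ := hp
    have := hcon p.1 p.2 hadj h1 h2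
    rw [← hancard, ← hancard] at this
    omega
  set Q : ℕ := ∑ x ∈ Vs, a x * a x with hQ
  have hQ1 : ∑ p ∈ E, (a p.1 + a p.2) = 2 * Q := by
    rw [Finset.sum_add_distrib, hswap, key, hQ]
    ring
  have hEcard : E.card = T := by
    have h := key (fun _ => 1)
    simp only [mul_one] at h
    rw [Finset.card_eq_sum_ones, h, hT]
  have hQ2 : 2 * Q ≤ (2 * (s - r) - 1) * T := by
    rw [← hQ1, ← hEcard]
    calc ∑ p ∈ E, (a p.1 + a p.2) ≤ ∑ p ∈ E, (2 * (s - r) - 1) := Finset.sum_le_sum hEbound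
    _ = (2 * (s - r) - 1) * E.card := by rw [Finset.sum_const, smul_eq_mul, mul_comm]
  -- Cauchy–Schwarz over ℤ
  have hCS : (T : ℤ) ^ 2 ≤ (N : ℤ) * ∑ x ∈ Vs, (a x : ℤ) ^ 2 := by
    have := sq_sum_le_card_mul_sum_sq (s := Vs) (f := fun x => (a x : ℤ))
    simpa [hT, hN] using this
  have hQcast : (∑ x ∈ Vs, (a x : ℤ) ^ 2) = (Q : ℤ) := by
    rw [hQ]
    push_cast
    apply Finset.sum_congr rfl
    intro x _
    ring
  rw [hQcast] at hCS
  -- assemble the contradiction in ℤ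
  set d : ℤ := (s : ℤ) - (r : ℤ) with hd
  have hd1 : 1 ≤ d := by
    rw [hd]
    have : (r : ℤ) < (s : ℤ) := by exact_mod_cast hrs
    omega
  have hQ2' : 2 * (Q : ℤ) ≤ (2 * d - 1) * (T : ℤ) := by
    have h2 : (2 * (s - r) - 1 : ℕ) = (2 * d - 1 : ℤ) := by
      have : (r:ℤ) ≤ (s:ℤ) := by exact_mod_cast hrs.le
      rw [hd]
      push_cast [Nat.cast_sub hrs.le]
      omega
    calc (2 : ℤ) * Q = ((2 * Q : ℕ) : ℤ) := by push_cast; ring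
    _ ≤ (((2 * (s - r) - 1) * T : ℕ) : ℤ) := by exact_mod_cast hQ2
    _ = (2 * d - 1) * (T : ℤ) := by rw [Nat.cast_mul, h2]
  have hTlb' : d * (N : ℤ) ≤ (T : ℤ) := by
    have : ((s * N : ℕ) : ℤ) ≤ ((T + r * N : ℕ) : ℤ) := by exact_mod_cast hTlb
    push_cast at this
    rw [hd]
    linarith
  have hN1 : (1 : ℤ) ≤ (N : ℤ) := by exact_mod_cast hNpos
  have hT1 : (1 : ℤ) ≤ (T : ℤ) := le_trans (by nlinarith) hTlb'
  have e1 : 2 * (T : ℤ) * T ≤ 2 * ((N : ℤ) * Q) := by nlinarith [hCS]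
  have e2 : 2 * ((N : ℤ) * Q) ≤ (N : ℤ) * ((2 * d - 1) * T) := by
    have := mul_le_mul_of_nonneg_left hQ2' (by linarith : (0:ℤ) ≤ (N:ℤ))
    linarith
  have hstep2 : 2 * (T : ℤ) ≤ (N : ℤ) * (2 * d - 1) := by
    have hTpos : (0 : ℤ) < T := by linarith
    have h' : (2 * (T:ℤ)) * T ≤ ((N:ℤ) * (2 * d - 1)) * T := by
      calc (2 * (T:ℤ)) * T = 2 * (T:ℤ) * T := by ring
      _ ≤ 2 * ((N : ℤ) * Q) := e1
      _ ≤ (N : ℤ) * ((2 * d - 1) * T) := e2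
      _ = ((N:ℤ) * (2 * d - 1)) * T := by ring
    exact le_of_mul_le_mul_right h' hTpos
  nlinarith [hstep2, hTlb', hN1, hd1]

end Avg

end Aux

set_option maxHeartbeats 1000000 in
/-- Moore-type lower bound for even girth `g > 4`. -/
theorem stmt_7 (r s g n : ℕ) (hr : 2 ≤ r) (hrs : r < s) (heven : Even g) (hg : 4 < g)
    (G : SimpleGraph (Fin n)) (h : IsBabi r s g G) :
    2 * (s + (r * s + (s - r) ^ 2 - 2 * s + 1) *
      (∑ t ∈ Finset.range ((g - 6) / 2 + 1), (r - 1) ^ t)) ≤ n := by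
  classical
  obtain ⟨hgirtheq, hdeg, hexr, hexs, hbal⟩ := h
  obtain ⟨m, hm⟩ := heven
  set k : ℕ := m with hkdef
  have hg2 : g = 2 * k := by omega
  have hk3 : 3 ≤ k := by omega
  have hgb : ∀ ⦃w : Fin n⦄ (c : G.Walk w w), c.IsCycle → 2 * k ≤ c.length := by
    have := girth_bound hgirtheq (by omega)
    rwa [hg2] at this
  have hdegmin : ∀ w, r ≤ deg G w := by
    intro w
    rcases hdeg w with hw | hw <;> omega
  obtain ⟨u, v, huv, hus, hvs, hauv⟩ := exists_good_edge hrs hdeg hbal hexs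
  set S : ℕ := ∑ j ∈ Finset.range (k - 2), (r - 1) ^ j with hS
  set au : ℕ := ((G.neighborSet u) ∩ {z | deg G z = s}).ncard with hau
  set av : ℕ := ((G.neighborSet v) ∩ {z | deg G z = s}).ncard with hav
  -- one-sided bound
  have side : ∀ x y : Fin n, G.Adj x y → deg G x = s → deg G y = s →
      s + (((((G.neighborSet x) ∩ {z | deg G z = s}).ncard - 1) * (s - 1)
        + (s - ((G.neighborSet x) ∩ {z | deg G z = s}).ncard) * (r - 1)) * S)
      ≤ ∑ t ∈ Finset.range k, (lvl G x y t).ncard := by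
    intro x y hxy hxs hys
    set ax : ℕ := ((G.neighborSet x) ∩ {z | deg G z = s}).ncard with hax
    have hax1 : 1 ≤ ax := by
      rw [hax]
      exact Set.ncard_pos (Set.toFinite _) |>.2 ⟨y, hxy, hys⟩
    have haxs : ax ≤ s := by
      rw [hax, ← hxs]
      exact Set.ncard_le_ncard (fun z hz => hz.1) (Set.toFinite _)
    -- the sum over the first level
    set L1 : Finset (Fin n) := (Set.toFinite (lvl G x y 1)).toFinset with hL1
    have hlv1 : lvl G x y 1 = G.neighborSet x \ {y} := lvl_one hgb hk3 hxy
    have hcardA : (L1.filter (fun w => deg G w = s)).card = ax - 1 := by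
      have hfe : L1.filter (fun w => deg G w = s)
          = (Set.toFinite (((G.neighborSet x) ∩ {z | deg G z = s}) \ {y})).toFinset := by
        ext w
        simp only [Finset.mem_filter, hL1, Set.Finite.mem_toFinset, hlv1, Set.mem_diff,
          Set.mem_inter_iff, Set.mem_singleton_iff, Set.mem_setOf_eq, mem_neighborSet]
        tauto
      rw [hfe, ← Set.ncard_eq_toFinset_card,
        Set.ncard_diff_singleton_of_mem (show y ∈ G.neighborSet x ∩ {z | deg G z = s} from ⟨hxy, hys⟩)]
    have hcardL1 : L1.card = s - 1 := by
      rw [hL1, ← Set.ncard_eq_toFinset_card, hlv1,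
        Set.ncard_diff_singleton_of_mem (show y ∈ G.neighborSet x from hxy)]
      rw [← hxs]
      rfl
    have hcardB : (L1.filter (fun w => ¬ deg G w = s)).card = s - ax := by
      have := Finset.card_filter_add_card_filter_not
        (s := L1) (p := fun w => deg G w = s)
      rw [hcardA, hcardL1] at this
      omega
    have hsum1 : ∑ w ∈ L1, (deg G w - 1) = (ax - 1) * (s - 1) + (s - ax) * (r - 1) := by
      rw [← Finset.sum_filter_add_sum_filter_not L1 (fun w => deg G w = s)]
      have e1 : ∑ w ∈ L1.filter (fun w => deg G w = s), (deg G w - 1)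
          = (ax - 1) * (s - 1) := by
        rw [Finset.sum_congr rfl (fun w hw => by
          rw [(Finset.mem_filter.1 hw).2]), Finset.sum_const, smul_eq_mul, hcardA]
      have e2 : ∑ w ∈ L1.filter (fun w => ¬ deg G w = s), (deg G w - 1)
          = (s - ax) * (r - 1) := by
        have hr' : ∀ w ∈ L1.filter (fun w => ¬ deg G w = s), deg G w - 1 = r - 1 := by
          intro w hw
          have := (Finset.mem_filter.1 hw).2
          rcases hdeg w with h | h
          · rw [h]
          · exact absurd h this
        rw [Finset.sum_congr rfl hr', Finset.sum_const, smul_eq_mul, hcardB]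
      rw [e1, e2]
    have := side_sum hgb hk3 hxy hdegmin (by omega)
    rw [hsum1, hxs] at this
    exact this
  have hu := side u v huv hus hvs
  have hv := side v u huv.symm hvs hus
  have htot := total_card (G := G) (k := k) (u := u) (v := v) hgb hk3 huv
  rw [Fintype.card_fin] at htot
  rw [Finset.sum_add_distrib] at htot
  -- replace the goal's sum with S
  have hidx : (g - 6) / 2 + 1 = k - 2 := by omega
  rw [hidx, ← hS]
  -- arithmetic conclusion
  set M : ℕ := r * s + (s - r) ^ 2 - 2 * s + 1 with hM
  have hM2 : 2 * M ≤ ((au - 1) * (s - 1) + (s - au) * (r - 1))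
      + ((av - 1) * (s - 1) + (s - av) * (r - 1)) := by
    have hau1 : 1 ≤ au := by
      rw [hau]
      exact Set.ncard_pos (Set.toFinite _) |>.2 ⟨v, huv, hvs⟩
    have hav1 : 1 ≤ av := by
      rw [hav]
      exact Set.ncard_pos (Set.toFinite _) |>.2 ⟨u, huv.symm, hus⟩
    have haus : au ≤ s := by
      rw [hau, ← hus]
      exact Set.ncard_le_ncard (fun z hz => hz.1) (Set.toFinite _)
    have havs : av ≤ s := by
      rw [hav, ← hvs]
      exact Set.ncard_le_ncard (fun z hz => hz.1) (Set.toFinite _)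
    have hrs2 : 2 * s ≤ r * s := Nat.mul_le_mul_right s hr
    zify [hau1, hav1, haus, havs, (show 1 ≤ s by omega), (show 1 ≤ r by omega)]
    have hMc : ((r * s + (s - r) ^ 2 - 2 * s : ℕ) : ℤ)
        = (r : ℤ) * s + ((s : ℤ) - r) ^ 2 - 2 * s := by
      have h2 : 2 * s ≤ r * s + (s - r : ℕ) ^ 2 := le_trans hrs2 (Nat.le_add_right _ _)
      push_cast [Nat.cast_sub h2, Nat.cast_sub hrs.le]
      ring
    rw [hM, Nat.cast_add, Nat.cast_one, hMc]
    have hab : 2 * ((s : ℤ) - r) ≤ (au : ℤ) + av := by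
      have : ((2 * (s - r) : ℕ) : ℤ) ≤ ((au + av : ℕ) : ℤ) := by exact_mod_cast hauv
      push_cast [Nat.cast_sub hrs.le] at this
      linarith
    have hsr : (0 : ℤ) ≤ (s : ℤ) - r := by
      have : (r : ℤ) ≤ s := by exact_mod_cast hrs.le
      linarith
    nlinarith [mul_le_mul_of_nonneg_right hab hsr]
  calc 2 * (s + M * S) = (s + M * S) + (s + M * S) := by ring
  _ ≤ (s + (((au - 1) * (s - 1) + (s - au) * (r - 1)) * S))
      + (s + (((av - 1) * (s - 1) + (s - av) * (r - 1)) * S)) := by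
      have h2MS : 2 * (M * S) ≤ ((au - 1) * (s - 1) + (s - au) * (r - 1)) * S
          + ((av - 1) * (s - 1) + (s - av) * (r - 1)) * S := by
        calc 2 * (M * S) = (2 * M) * S := by ring
        _ ≤ (((au - 1) * (s - 1) + (s - au) * (r - 1))
            + ((av - 1) * (s - 1) + (s - av) * (r - 1))) * S := Nat.mul_le_mul_right S hM2
        _ = _ := by ring
      omega
  _ ≤ (∑ t ∈ Finset.range k, (lvl G u v t).ncard)
      + (∑ t ∈ Finset.range k, (lvl G v u t).ncard) := Nat.add_le_add hu hv
  _ ≤ n := htot
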